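/- arXiv:2508.02716 — 3 statements merged into one kernel-verified Lean document; each statement's English description precedes it below -/
import Mathlib

section
/- Every α ∈ (E₆,ℝ)^C with τ∘α∘τ = α maps the real subspace J(3,ℝ) of real symmetric 3×3 matrices into itself, and the restriction map α ↦ α|_{J(3,ℝ)} is a group isomorphism from {α ∈ (E₆,ℝ)^C : τ∘α∘τ = α} onto E₆₍₋₂₆₎,ℝ. -/
open Matrix

noncomputable section

/-- `J(3,ℝ^C)`: the complex vector space of symmetric 3×3 complex matrices. -/
def Sym3 : Submodule ℂ (Matrix (Fin 3) (Fin 3) ℂ) where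
  carrier := {X | Xᵀ = X}
  add_mem' := fun {a b} ha hb => by
    simp only [Set.mem_setOf_eq] at *
    rw [Matrix.transpose_add, ha, hb]
  zero_mem' := by simp [Set.mem_setOf_eq]
  smul_mem' := fun c a ha => by
    simp only [Set.mem_setOf_eq] at *
    rw [Matrix.transpose_smul, ha]

/-- `J(3,ℝ)`: the real vector space of symmetric 3×3 real matrices. -/
def SymR3 : Submodule ℝ (Matrix (Fin 3) (Fin 3) ℝ) where
  carrier := {X | Xᵀ = X}
  add_mem' := fun {a b} ha hb => by
    simp only [Set.mem_setOf_eq] at *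
    rw [Matrix.transpose_add, ha, hb]
  zero_mem' := by simp [Set.mem_setOf_eq]
  smul_mem' := fun c a ha => by
    simp only [Set.mem_setOf_eq] at *
    rw [Matrix.transpose_smul, ha]

/-- `τ`, entrywise complex conjugation, as a map of `J(3,ℝ^C)`. -/
def tauSym (X : Sym3) : Sym3 :=
  ⟨(X : Matrix (Fin 3) (Fin 3) ℂ).map (starRingEnd ℂ), by
    have hX : (X : Matrix (Fin 3) (Fin 3) ℂ)ᵀ = (X : Matrix (Fin 3) (Fin 3) ℂ) := X.2
    show ((X : Matrix (Fin 3) (Fin 3) ℂ).map (starRingEnd ℂ))ᵀ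
        = (X : Matrix (Fin 3) (Fin 3) ℂ).map (starRingEnd ℂ)
    rw [← Matrix.transpose_map, hX]⟩

/-- The inclusion `J(3,ℝ) ⊆ J(3,ℝ^C)`. -/
def cplxSym (X : SymR3) : Sym3 :=
  ⟨(X : Matrix (Fin 3) (Fin 3) ℝ).map (fun r => (r : ℂ)), by
    have hX : (X : Matrix (Fin 3) (Fin 3) ℝ)ᵀ = (X : Matrix (Fin 3) (Fin 3) ℝ) := X.2
    show ((X : Matrix (Fin 3) (Fin 3) ℝ).map (fun r => (r : ℂ)))ᵀ
        = (X : Matrix (Fin 3) (Fin 3) ℝ).map (fun r => (r : ℂ))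
    rw [← Matrix.transpose_map, hX]⟩

/-- `{α ∈ (E₆,ℝ)^C : τ∘α∘τ = α}` (equivalently, `α` commutes with `τ`). -/
def E6tauSet : Set (Sym3 ≃ₗ[ℂ] Sym3) :=
  {α | (∀ X : Sym3, ((α X : Matrix (Fin 3) (Fin 3) ℂ)).det
          = ((X : Matrix (Fin 3) (Fin 3) ℂ)).det) ∧
       (∀ X : Sym3, α (tauSym X) = tauSym (α X))}


abbrev MC := Matrix (Fin 3) (Fin 3) ℂ
abbrev MR := Matrix (Fin 3) (Fin 3) ℝ

lemma cplxSym_coe (X : SymR3) :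
    (cplxSym X : MC) = (X : MR).map (fun r => (r : ℂ)) := rfl

lemma cplxSym_apply (X : SymR3) (i j : Fin 3) :
    (cplxSym X : MC) i j = ((X : MR) i j : ℂ) := rfl

lemma cplxSym_inj : Function.Injective cplxSym := by
  intro X Y h
  apply Subtype.ext
  ext i j
  have h2 := congrArg (fun Z : Sym3 => (Z : MC) i j) h
  simpa [cplxSym_apply, Complex.ofReal_inj] using h2

lemma cplxSym_add (X Y : SymR3) : cplxSym (X + Y) = cplxSym X + cplxSym Y := by
  apply Subtype.ext; ext i j
  simp [cplxSym_apply, cplxSym]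

lemma cplxSym_smul (c : ℝ) (X : SymR3) : cplxSym (c • X) = (c : ℂ) • cplxSym X := by
  apply Subtype.ext; ext i j
  simp [cplxSym_apply, cplxSym]

lemma cplxSym_sub (X Y : SymR3) : cplxSym (X - Y) = cplxSym X - cplxSym Y := by
  apply Subtype.ext; ext i j
  simp [cplxSym_apply, cplxSym]

lemma cplxSym_zero : cplxSym 0 = 0 := by
  apply Subtype.ext; ext i j
  simp [cplxSym_apply, cplxSym]

lemma tau_cplxSym (X : SymR3) : tauSym (cplxSym X) = cplxSym X := by
  apply Subtype.ext; ext i j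
  simp [tauSym, cplxSym]

/-- real part -/
def reP (X : Sym3) : SymR3 :=
  ⟨(X : MC).map Complex.re, by
    have hX : (X : MC)ᵀ = (X : MC) := X.2
    show ((X : MC).map Complex.re)ᵀ = (X : MC).map Complex.re
    rw [← Matrix.transpose_map, hX]⟩

/-- imaginary part -/
def imP (X : Sym3) : SymR3 :=
  ⟨(X : MC).map Complex.im, by
    have hX : (X : MC)ᵀ = (X : MC) := X.2
    show ((X : MC).map Complex.im)ᵀ = (X : MC).map Complex.im
    rw [← Matrix.transpose_map, hX]⟩

lemma decomp (X : Sym3) : cplxSym (reP X) + Complex.I • cplxSym (imP X) = X := by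
  apply Subtype.ext; ext i j
  simp only [Submodule.coe_add, Submodule.coe_smul, Matrix.add_apply, Matrix.smul_apply,
    cplxSym_apply, reP, imP, Matrix.map_apply, smul_eq_mul]
  rw [mul_comm]
  exact Complex.re_add_im _

lemma reP_apply (X : Sym3) (i j : Fin 3) : (reP X : MR) i j = ((X : MC) i j).re := rfl
lemma imP_apply (X : Sym3) (i j : Fin 3) : (imP X : MR) i j = ((X : MC) i j).im := rfl

lemma reP_of (A B : SymR3) : reP (cplxSym A + Complex.I • cplxSym B) = A := by
  apply Subtype.ext; ext i j
  simp [reP_apply, cplxSym_apply]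

lemma imP_of (A B : SymR3) : imP (cplxSym A + Complex.I • cplxSym B) = B := by
  apply Subtype.ext; ext i j
  simp [imP_apply, cplxSym_apply]

lemma reP_cplx (A : SymR3) : reP (cplxSym A) = A := by
  apply Subtype.ext; ext i j; simp [reP_apply, cplxSym_apply]

lemma imP_cplx (A : SymR3) : imP (cplxSym A) = 0 := by
  apply Subtype.ext; ext i j; simp [imP_apply, cplxSym_apply]

lemma reP_smul (c : ℂ) (X : Sym3) : reP (c • X) = c.re • reP X - c.im • imP X := by
  apply Subtype.ext; ext i j
  simp [reP_apply, imP_apply, Complex.mul_re]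

lemma imP_smul (c : ℂ) (X : Sym3) : imP (c • X) = c.re • imP X + c.im • reP X := by
  apply Subtype.ext; ext i j
  simp [reP_apply, imP_apply, Complex.mul_im]

lemma reP_add (X Y : Sym3) : reP (X + Y) = reP X + reP Y := by
  apply Subtype.ext; ext i j; simp [reP_apply]

lemma imP_add (X Y : Sym3) : imP (X + Y) = imP X + imP Y := by
  apply Subtype.ext; ext i j; simp [imP_apply]

lemma cplx_reP_of_tau {X : Sym3} (h : tauSym X = X) : cplxSym (reP X) = X := by
  apply Subtype.ext; ext i j
  have h2 : (starRingEnd ℂ) ((X : MC) i j) = (X : MC) i j := by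
    have := congrArg (fun Z : Sym3 => (Z : MC) i j) h
    simpa [tauSym] using this
  rw [Complex.conj_eq_iff_re] at h2
  simpa [cplxSym_apply, reP_apply] using h2

section Restrict

def restr (α : Sym3 ≃ₗ[ℂ] Sym3) (X : SymR3) : SymR3 := reP (α (cplxSym X))

lemma cplx_restr {α : Sym3 ≃ₗ[ℂ] Sym3}
    (hτ : ∀ X, α (tauSym X) = tauSym (α X)) (X : SymR3) :
    cplxSym (restr α X) = α (cplxSym X) := by
  apply cplx_reP_of_tau
  rw [← hτ, tau_cplxSym]

lemma hτ_symm {α : Sym3 ≃ₗ[ℂ] Sym3}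
    (hτ : ∀ X, α (tauSym X) = tauSym (α X)) :
    ∀ X, α.symm (tauSym X) = tauSym (α.symm X) := by
  intro X
  apply α.injective
  rw [LinearEquiv.apply_symm_apply, hτ, LinearEquiv.apply_symm_apply]

def mkPhi (α : Sym3 ≃ₗ[ℂ] Sym3) (hτ : ∀ X, α (tauSym X) = tauSym (α X)) :
    SymR3 ≃ₗ[ℝ] SymR3 where
  toFun := restr α
  invFun := restr α.symm
  map_add' X Y := by
    apply cplxSym_inj
    rw [cplxSym_add, cplx_restr hτ, cplx_restr hτ, cplx_restr hτ, cplxSym_add, map_add]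
  map_smul' c X := by
    apply cplxSym_inj
    simp only [RingHom.id_apply]
    rw [cplxSym_smul, cplx_restr hτ, cplx_restr hτ, cplxSym_smul, _root_.map_smul]
  left_inv X := by
    apply cplxSym_inj
    rw [cplx_restr (hτ_symm hτ), cplx_restr hτ, LinearEquiv.symm_apply_apply]
  right_inv X := by
    apply cplxSym_inj
    rw [cplx_restr hτ, cplx_restr (hτ_symm hτ), LinearEquiv.apply_symm_apply]

lemma mkPhi_apply (α : Sym3 ≃ₗ[ℂ] Sym3) (hτ : ∀ X, α (tauSym X) = tauSym (α X))
    (X : SymR3) : mkPhi α hτ X = restr α X := rfl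

end Restrict

section Complexify

variable (γ : SymR3 ≃ₗ[ℝ] SymR3)

def cxf (X : Sym3) : Sym3 :=
  cplxSym (γ (reP X)) + Complex.I • cplxSym (γ (imP X))

lemma cxf_add (X Y : Sym3) : cxf γ (X + Y) = cxf γ X + cxf γ Y := by
  unfold cxf
  rw [reP_add, imP_add, map_add, map_add, cplxSym_add, cplxSym_add, smul_add]
  abel

lemma cxf_smul (c : ℂ) (X : Sym3) : cxf γ (c • X) = c • cxf γ X := by
  unfold cxf
  simp only [reP_smul, imP_smul, map_sub, map_add, _root_.map_smul, cplxSym_sub,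
    cplxSym_add, cplxSym_smul, smul_add, smul_smul]
  set P := cplxSym (γ (reP X))
  set Q := cplxSym (γ (imP X))
  have e1 : c • P = (c.re : ℂ) • P + (Complex.I * (c.im : ℂ)) • P := by
    rw [← add_smul]
    congr 1
    apply Complex.ext <;> simp
  have e2 : (c * Complex.I) • Q = (-(c.im : ℂ)) • Q + (Complex.I * (c.re : ℂ)) • Q := by
    rw [← add_smul]
    congr 1
    apply Complex.ext <;> simp
  rw [e1, e2]
  module

lemma cxf_comp (δ : SymR3 ≃ₗ[ℝ] SymR3) (X : Sym3) : cxf γ (cxf δ X) = cplxSym (γ (δ (reP X))) + Complex.I • cplxSym (γ (δ (imP X))) := by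
  unfold cxf
  rw [reP_of, imP_of]

def cxL : Sym3 ≃ₗ[ℂ] Sym3 where
  toFun := cxf γ
  invFun := cxf γ.symm
  map_add' := cxf_add γ
  map_smul' := cxf_smul γ
  left_inv X := by
    show cxf γ.symm (cxf γ X) = X
    rw [cxf_comp, LinearEquiv.symm_apply_apply, LinearEquiv.symm_apply_apply, decomp]
  right_inv X := by
    show cxf γ (cxf γ.symm X) = X
    rw [cxf_comp, LinearEquiv.apply_symm_apply, LinearEquiv.apply_symm_apply, decomp]

lemma cxL_tau (X : Sym3) : cxL γ (tauSym X) = tauSym (cxL γ X) := by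
  show cxf γ (tauSym X) = tauSym (cxf γ X)
  have hre : reP (tauSym X) = reP X := by
    apply Subtype.ext; ext i j; simp [reP_apply, tauSym]
  have him : imP (tauSym X) = -imP X := by
    apply Subtype.ext; ext i j; simp [imP_apply, tauSym]
  unfold cxf
  rw [hre, him, map_neg]
  apply Subtype.ext; ext i j
  simp only [Submodule.coe_add, Submodule.coe_smul, Matrix.add_apply, Matrix.smul_apply,
    tauSym, Matrix.map_apply, cplxSym_apply, Submodule.coe_neg, Matrix.neg_apply,
    smul_eq_mul, map_add, _root_.map_mul, Complex.conj_ofReal, Complex.conj_I]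
  push_cast
  ring

/-- Matrix of polynomials `A + X·B`. -/
def Mp (A B : SymR3) : Matrix (Fin 3) (Fin 3) (Polynomial ℂ) :=
  Matrix.of fun i j => Polynomial.C (((A : MR) i j : ℂ)) +
    Polynomial.C (((B : MR) i j : ℂ)) * Polynomial.X

lemma Mp_eval (A B : SymR3) (z : ℂ) :
    ((Mp A B).det).eval z = ((cplxSym A : MC) + z • (cplxSym B : MC)).det := by
  have h := RingHom.map_det (Polynomial.evalRingHom z) (Mp A B)
  have h2 : Polynomial.eval z (Mp A B).det = ((Polynomial.evalRingHom z).mapMatrix (Mp A B)).det := h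
  rw [h2]
  congr 1
  ext i j
  simp only [RingHom.mapMatrix_apply, Matrix.map_apply, Mp, Matrix.of_apply,
    Polynomial.coe_evalRingHom, Polynomial.eval_add, Polynomial.eval_mul, Polynomial.eval_C,
    Polynomial.eval_X, Matrix.add_apply, Matrix.smul_apply, cplxSym_apply, smul_eq_mul]
  ring

lemma det_cplx (Y : SymR3) : ((cplxSym Y : MC)).det = (((Y : MR)).det : ℂ) := by
  have h := RingHom.map_det (Complex.ofRealHom) (Y : MR)
  have h2 : ((Y : MR).map fun r => (r : ℂ)) = Complex.ofRealHom.mapMatrix (Y : MR) := rfl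
  rw [cplxSym_coe, h2, ← h]
  rfl

lemma cplx_combo (A B : SymR3) (r : ℝ) :
    (cplxSym A : MC) + (r : ℂ) • (cplxSym B : MC) = (cplxSym (A + r • B) : MC) := by
  rw [cplxSym_add, cplxSym_smul]
  rfl

lemma det_complexify (γ : SymR3 ≃ₗ[ℝ] SymR3)
    (hγ : ∀ X : SymR3, ((γ X : MR)).det = ((X : MR)).det) (A B : SymR3) :
    ((cplxSym (γ A) : MC) + Complex.I • (cplxSym (γ B) : MC)).det
      = ((cplxSym A : MC) + Complex.I • (cplxSym B : MC)).det := by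
  set p := (Mp (γ A) (γ B)).det - (Mp A B).det with hp
  have hroot : ∀ r : ℝ, p.IsRoot (r : ℂ) := by
    intro r
    simp only [Polynomial.IsRoot, hp, Polynomial.eval_sub, Mp_eval]
    rw [cplx_combo, cplx_combo, det_cplx, det_cplx, ← map_smul γ, ← map_add γ, hγ]
    ring
  have hpz : p = 0 := by
    apply Polynomial.eq_zero_of_infinite_isRoot
    apply Set.Infinite.mono (s := Set.range (fun r : ℝ => (r : ℂ)))
    · rintro _ ⟨r, rfl⟩
      exact hroot r
    · exact Set.infinite_range_of_injective Complex.ofReal_injective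
  have := congrArg (Polynomial.eval Complex.I) hpz
  simp only [hp, Polynomial.eval_sub, Polynomial.eval_zero, Mp_eval, sub_eq_zero] at this
  exact this

end Complexify

lemma mem_det {α : Sym3 ≃ₗ[ℂ] Sym3} (h : α ∈ E6tauSet) :
    ∀ X : Sym3, ((α X : MC)).det = ((X : MC)).det := h.1

lemma mem_tau {α : Sym3 ≃ₗ[ℂ] Sym3} (h : α ∈ E6tauSet) :
    ∀ X : Sym3, α (tauSym X) = tauSym (α X) := h.2

lemma coe_decomp (X : Sym3) :
    (X : MC) = (cplxSym (reP X) : MC) + Complex.I • (cplxSym (imP X) : MC) := by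
  conv_lhs => rw [← decomp X]
  rfl

/-- every `α ∈ (E₆,ℝ)^C` with `τατ = α` maps `J(3,ℝ)` into itself, and the
restriction map is a group isomorphism from `{α ∈ (E₆,ℝ)^C : τατ = α}` onto `E₆₍₋₂₆₎,ℝ`,
the group of ℝ-linear det-preserving automorphisms of `J(3,ℝ)`. -/
theorem stmt_4 :
    (∀ α ∈ E6tauSet, ∀ X : Sym3, tauSym X = X → tauSym (α X) = α X) ∧
    (∃ Φ : E6tauSet → (SymR3 ≃ₗ[ℝ] SymR3),
      (∀ (α : E6tauSet) (X : SymR3),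
        (((Φ α) X : Matrix (Fin 3) (Fin 3) ℝ)).map (fun r => (r : ℂ))
          = (α.val (cplxSym X) : Matrix (Fin 3) (Fin 3) ℂ)) ∧
      (∀ (α β : E6tauSet) (h : α.val * β.val ∈ E6tauSet),
        Φ ⟨α.val * β.val, h⟩ = Φ α * Φ β) ∧
      Function.Injective Φ ∧
      (∀ γ : SymR3 ≃ₗ[ℝ] SymR3,
        (∀ X : SymR3, ((γ X : Matrix (Fin 3) (Fin 3) ℝ)).det
            = ((X : Matrix (Fin 3) (Fin 3) ℝ)).det) ↔ ∃ α, Φ α = γ)) := by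
  constructor
  · intro α hα X hX
    rw [← mem_tau hα, hX]
  · refine ⟨fun α => mkPhi α.val (mem_tau α.2), ?_, ?_, ?_, ?_⟩
    · intro α X
      have h := congrArg (fun Z : Sym3 => (Z : MC)) (cplx_restr (mem_tau α.2) X)
      simpa [cplxSym_coe, mkPhi_apply] using h
    · intro α β h
      apply LinearEquiv.ext
      intro X
      apply cplxSym_inj
      have h1 : cplxSym (mkPhi (α.val * β.val) (mem_tau h) X)
          = (α.val * β.val) (cplxSym X) := cplx_restr (mem_tau h) X
      have h2 : (α.val * β.val) (cplxSym X) = α.val (β.val (cplxSym X)) := rfl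
      have h3 : cplxSym ((mkPhi α.val (mem_tau α.2) * mkPhi β.val (mem_tau β.2)) X)
          = α.val (β.val (cplxSym X)) := by
        have h4 : (mkPhi α.val (mem_tau α.2) * mkPhi β.val (mem_tau β.2)) X
            = mkPhi α.val (mem_tau α.2) (mkPhi β.val (mem_tau β.2) X) := rfl
        rw [h4, mkPhi_apply, mkPhi_apply, cplx_restr (mem_tau α.2), cplx_restr (mem_tau β.2)]
      rw [h1, h2, h3]
    · intro α β h
      apply Subtype.ext
      apply LinearEquiv.ext
      intro X
      have key : ∀ (δ : E6tauSet) (Y : Sym3), δ.val Y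
          = cplxSym (mkPhi δ.val (mem_tau δ.2) (reP Y))
            + Complex.I • cplxSym (mkPhi δ.val (mem_tau δ.2) (imP Y)) := by
        intro δ Y
        rw [mkPhi_apply, mkPhi_apply, cplx_restr (mem_tau δ.2), cplx_restr (mem_tau δ.2),
          ← _root_.map_smul, ← map_add, decomp]
      have h' : mkPhi α.val (mem_tau α.2) = mkPhi β.val (mem_tau β.2) := h
      rw [key α, key β, h']
    · intro γ
      constructor
      · intro hγ
        have hτα : ∀ X, cxL γ (tauSym X) = tauSym (cxL γ X) := cxL_tau γ
        have hdet : ∀ X : Sym3, ((cxL γ X : MC)).det = ((X : MC)).det := by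
          intro X
          have hαX : ((cxL γ X : MC))
              = (cplxSym (γ (reP X)) : MC) + Complex.I • (cplxSym (γ (imP X)) : MC) := rfl
          rw [hαX, coe_decomp X]
          exact det_complexify γ hγ _ _
        refine ⟨⟨cxL γ, hdet, hτα⟩, ?_⟩
        apply LinearEquiv.ext
        intro X
        apply cplxSym_inj
        rw [mkPhi_apply, cplx_restr hτα]
        show cxf γ (cplxSym X) = cplxSym (γ X)
        unfold cxf
        rw [reP_cplx, imP_cplx, map_zero, cplxSym_zero, smul_zero, add_zero]
      · rintro ⟨α, rfl⟩ X
        apply Complex.ofReal_injective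
        rw [← det_cplx, ← det_cplx]
        have h1 : cplxSym (mkPhi α.val (mem_tau α.2) X) = α.val (cplxSym X) :=
          cplx_restr (mem_tau α.2) X
        rw [h1]
        exact mem_det α.2 (cplxSym X)
end
end

section
/- The map SL(3,ℝ) → E₆₍₋₂₆₎,ℝ sending A to the transformation X ↦ A·X·ᵗA is well defined and is a group isomorphism; in particular E₆₍₋₂₆₎,ℝ ≅ SL(3,ℝ). -/
open Matrix

noncomputable section

namespace Stmt5

abbrev Mat := Matrix (Fin 3) (Fin 3) ℝ

lemma mem_symR3 {X : Mat} : X ∈ SymR3 ↔ Xᵀ = X := Iff.rfl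

lemma symm_coe (X : SymR3) : (X : Mat)ᵀ = (X : Mat) := X.2

/-- congruence as a linear map on SymR3 -/
def cmapFun (A : Mat) : SymR3 →ₗ[ℝ] SymR3 where
  toFun X := ⟨A * (X : Mat) * Aᵀ, by
    rw [mem_symR3, transpose_mul, transpose_mul, transpose_transpose, symm_coe,
      Matrix.mul_assoc]⟩
  map_add' X Y := by
    apply Subtype.ext
    simp [Matrix.mul_add, Matrix.add_mul]
  map_smul' c X := by
    apply Subtype.ext
    simp [Matrix.mul_smul, Matrix.smul_mul]

lemma cmapFun_apply (A : Mat) (X : SymR3) :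
    (cmapFun A X : Mat) = A * (X : Mat) * Aᵀ := rfl

def cmap (A : Matrix.SpecialLinearGroup (Fin 3) ℝ) : SymR3 ≃ₗ[ℝ] SymR3 :=
  LinearEquiv.ofLinear (cmapFun (A : Mat)) (cmapFun ((A⁻¹ : Matrix.SpecialLinearGroup (Fin 3) ℝ) : Mat))
    (by
      apply LinearMap.ext
      intro X
      apply Subtype.ext
      simp only [LinearMap.comp_apply, cmapFun_apply, LinearMap.id_apply]
      have h1 : (A : Mat) * ((A⁻¹ : Matrix.SpecialLinearGroup (Fin 3) ℝ) : Mat) = 1 := by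
        rw [← Matrix.SpecialLinearGroup.coe_mul, mul_inv_cancel,
          Matrix.SpecialLinearGroup.coe_one]
      calc (A : Mat) * (((A⁻¹ : Matrix.SpecialLinearGroup (Fin 3) ℝ) : Mat) * (X:Mat) * ((A⁻¹ : Matrix.SpecialLinearGroup (Fin 3) ℝ) : Mat)ᵀ) * (A : Mat)ᵀ
          = ((A : Mat) * ((A⁻¹ : Matrix.SpecialLinearGroup (Fin 3) ℝ) : Mat)) * (X:Mat) * ((A:Mat) * ((A⁻¹ : Matrix.SpecialLinearGroup (Fin 3) ℝ):Mat))ᵀ := by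
            rw [transpose_mul]; noncomm_ring [Matrix.mul_assoc]
        _ = (X : Mat) := by rw [h1]; simp)
    (by
      apply LinearMap.ext
      intro X
      apply Subtype.ext
      simp only [LinearMap.comp_apply, cmapFun_apply, LinearMap.id_apply]
      have h1 : ((A⁻¹ : Matrix.SpecialLinearGroup (Fin 3) ℝ) : Mat) * (A : Mat) = 1 := by
        rw [← Matrix.SpecialLinearGroup.coe_mul, inv_mul_cancel,
          Matrix.SpecialLinearGroup.coe_one]
      calc ((A⁻¹ : Matrix.SpecialLinearGroup (Fin 3) ℝ) : Mat) * ((A:Mat) * (X:Mat) * (A:Mat)ᵀ) * ((A⁻¹ : Matrix.SpecialLinearGroup (Fin 3) ℝ) : Mat)ᵀ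
          = (((A⁻¹ : Matrix.SpecialLinearGroup (Fin 3) ℝ):Mat) * (A:Mat)) * (X:Mat) * (((A⁻¹ : Matrix.SpecialLinearGroup (Fin 3) ℝ):Mat) * (A:Mat))ᵀ := by
            rw [transpose_mul]; noncomm_ring [Matrix.mul_assoc]
        _ = (X : Mat) := by rw [h1]; simp)

lemma cmap_apply (A : Matrix.SpecialLinearGroup (Fin 3) ℝ) (X : SymR3) :
    (cmap A X : Mat) = (A : Mat) * (X : Mat) * (A : Mat)ᵀ := rfl

def f : Matrix.SpecialLinearGroup (Fin 3) ℝ →* (SymR3 ≃ₗ[ℝ] SymR3) :=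
  MonoidHom.mk' cmap (by
    intro A B
    apply LinearEquiv.toLinearMap_injective
    apply LinearMap.ext
    intro X
    apply Subtype.ext
    show (cmap (A*B) X : Mat) = (cmap A (cmap B X) : Mat)
    rw [cmap_apply, cmap_apply, cmap_apply, Matrix.SpecialLinearGroup.coe_mul,
      transpose_mul]
    noncomm_ring [Matrix.mul_assoc])

lemma f_apply (A : Matrix.SpecialLinearGroup (Fin 3) ℝ) (X : SymR3) :
    (f A X : Mat) = (A : Mat) * (X : Mat) * (A : Mat)ᵀ := rfl

lemma det_f (A : Matrix.SpecialLinearGroup (Fin 3) ℝ) (X : SymR3) :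
    (f A X : Mat).det = (X : Mat).det := by
  rw [f_apply, det_mul, det_mul, det_transpose, A.2]
  ring


lemma f_mul_apply (A B : Matrix.SpecialLinearGroup (Fin 3) ℝ) (X : SymR3) :
    f (A * B) X = f A (f B X) := by
  rw [_root_.map_mul]
  rfl

lemma det_expand (X Y : Mat) (t : ℝ) :
    (X + t • Y).det = X.det + t * ((X.adjugate * Y).trace)
      + t^2 * ((Y.adjugate * X).trace) + t^3 * Y.det := by
  rw [det_fin_three, det_fin_three X, det_fin_three Y, adjugate_fin_three, adjugate_fin_three]
  simp only [trace_fin_three, mul_apply, Fin.sum_univ_three, Matrix.add_apply, Matrix.smul_apply,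
    smul_eq_mul, of_apply, cons_val', cons_val_zero, cons_val_one, head_cons, empty_val',
    cons_val_fin_one, head_fin_const, cons_val_two, tail_cons]
  ring

lemma cubic_coeff₁ {p0 p1 p2 p3 q0 q1 q2 q3 : ℝ}
    (h : ∀ t : ℝ, p0 + t*p1 + t^2*p2 + t^3*p3 = q0 + t*q1 + t^2*q2 + t^3*q3) :
    p1 = q1 := by
  have h0 := h 0
  have h1 := h 1
  have h2 := h (-1)
  have h3 := h 2
  norm_num at h0 h1 h2 h3
  linarith

lemma pairing_preserved (α : SymR3 ≃ₗ[ℝ] SymR3)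
    (hα : ∀ X : SymR3, ((α X : Mat)).det = ((X : Mat)).det) (X Y : SymR3) :
    ((α X : Mat).adjugate * (α Y : Mat)).trace
      = ((X : Mat).adjugate * (Y : Mat)).trace := by
  apply cubic_coeff₁ (p0 := (α X : Mat).det) (q0 := (X:Mat).det)
    (p2 := ((α Y : Mat).adjugate * (α X:Mat)).trace) (q2 := ((Y:Mat).adjugate * (X:Mat)).trace)
    (p3 := (α Y : Mat).det) (q3 := (Y:Mat).det)
  intro t
  rw [← det_expand, ← det_expand]
  have h1 : α (X + t • Y) = α X + t • α Y := by
    rw [map_add]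
    rw [LinearEquiv.map_smul]
  have hcoe : (α X : Mat) + t • (α Y : Mat) = ((α (X + t • Y) : SymR3) : Mat) := by
    rw [h1, Submodule.coe_add, Submodule.coe_smul]
  have hcoe2 : ((X + t • Y : SymR3) : Mat) = (X : Mat) + t • (Y : Mat) := by
    rw [Submodule.coe_add, Submodule.coe_smul]
  rw [hcoe, hα, hcoe2]

lemma sym_trace_sq_zero {S : Mat} (hs : Sᵀ = S) (h : (S * S).trace = 0) : S = 0 := by
  have e : ∀ i j : Fin 3, S j i = S i j := fun i j => congrFun (congrFun hs i) j
  rw [trace_fin_three] at h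
  simp only [mul_apply, Fin.sum_univ_three] at h
  rw [e 1 0, e 2 0, e 2 1] at h
  have h00 : S 0 0 = 0 := by nlinarith [mul_self_nonneg (S 0 0), mul_self_nonneg (S 1 1), mul_self_nonneg (S 2 2), mul_self_nonneg (S 1 0), mul_self_nonneg (S 2 0), mul_self_nonneg (S 2 1), h]
  have h11 : S 1 1 = 0 := by nlinarith [mul_self_nonneg (S 0 0), mul_self_nonneg (S 1 1), mul_self_nonneg (S 2 2), mul_self_nonneg (S 1 0), mul_self_nonneg (S 2 0), mul_self_nonneg (S 2 1), h]
  have h22 : S 2 2 = 0 := by nlinarith [mul_self_nonneg (S 0 0), mul_self_nonneg (S 1 1), mul_self_nonneg (S 2 2), mul_self_nonneg (S 1 0), mul_self_nonneg (S 2 0), mul_self_nonneg (S 2 1), h]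
  have h10 : S 1 0 = 0 := by nlinarith [mul_self_nonneg (S 0 0), mul_self_nonneg (S 1 1), mul_self_nonneg (S 2 2), mul_self_nonneg (S 1 0), mul_self_nonneg (S 2 0), mul_self_nonneg (S 2 1), h]
  have h20 : S 2 0 = 0 := by nlinarith [mul_self_nonneg (S 0 0), mul_self_nonneg (S 1 1), mul_self_nonneg (S 2 2), mul_self_nonneg (S 1 0), mul_self_nonneg (S 2 0), mul_self_nonneg (S 2 1), h]
  have h21 : S 2 1 = 0 := by nlinarith [mul_self_nonneg (S 0 0), mul_self_nonneg (S 1 1), mul_self_nonneg (S 2 2), mul_self_nonneg (S 1 0), mul_self_nonneg (S 2 0), mul_self_nonneg (S 2 1), h]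
  have h01 : S 0 1 = 0 := (e 1 0).trans h10
  have h02 : S 0 2 = 0 := (e 2 0).trans h20
  have h12 : S 1 2 = 0 := (e 2 1).trans h21
  ext i j
  fin_cases i <;> fin_cases j <;> simp only [Matrix.zero_apply] <;>
    first | exact h00 | exact h01 | exact h02 | exact h10 | exact h11 | exact h12 | exact h20 | exact h21 | exact h22

lemma adj_symm {X : Mat} (hs : Xᵀ = X) : (X.adjugate)ᵀ = X.adjugate := by
  rw [adjugate_transpose, hs]

lemma adj_zero_transfer (α : SymR3 ≃ₗ[ℝ] SymR3)
    (hα : ∀ X : SymR3, ((α X : Mat)).det = ((X : Mat)).det)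
    (X : SymR3) (h : (X : Mat).adjugate = 0) :
    (α X : Mat).adjugate = 0 := by
  set S : Mat := (α X : Mat).adjugate with hS
  have hsym : Sᵀ = S := adj_symm (α X).2
  have hmem : S ∈ SymR3 := hsym
  have hkey := pairing_preserved α hα X (α.symm ⟨S, hmem⟩)
  rw [h] at hkey
  simp only [LinearEquiv.apply_symm_apply] at hkey
  rw [Matrix.zero_mul, trace_zero] at hkey
  exact sym_trace_sq_zero hsym hkey

lemma vecMulVec_symm (v : Fin 3 → ℝ) : (vecMulVec v v)ᵀ = vecMulVec v v := by
  ext i j; simp [vecMulVec_apply, mul_comm]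

lemma adjugate_vecMulVec (v : Fin 3 → ℝ) : (vecMulVec v v).adjugate = 0 := by
  rw [adjugate_fin_three]
  ext i j
  fin_cases i <;> fin_cases j <;> simp [vecMulVec_apply] <;> ring

lemma vecMulVec_ne_zero {v : Fin 3 → ℝ} (hv : v ≠ 0) : vecMulVec v v ≠ 0 := by
  intro h
  apply hv
  funext i
  have := congrFun (congrFun h i) i
  simp only [vecMulVec_apply, Matrix.zero_apply] at this
  have : v i = 0 := by nlinarith [this]
  simpa using this

lemma rank_one_of_adj_zero {X : Mat} (hs : Xᵀ = X) (ha : X.adjugate = 0) (h0 : X ≠ 0) :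
    ∃ (ε : ℝ) (v : Fin 3 → ℝ), (ε = 1 ∨ ε = -1) ∧ v ≠ 0 ∧ X = ε • vecMulVec v v := by
  have e : ∀ i j : Fin 3, X j i = X i j := fun i j => congrFun (congrFun hs i) j
  have m : ∀ i j : Fin 3, (adjugate X) i j = 0 := fun i j => congrFun (congrFun ha i) j
  rw [adjugate_fin_three] at ha
  have m00 : X 1 1 * X 2 2 - X 1 2 * X 2 1 = 0 := by
    have := congrFun (congrFun ha 0) 0; simpa using this
  have m11 : X 0 0 * X 2 2 - X 0 2 * X 2 0 = 0 := by
    have := congrFun (congrFun ha 1) 1; simpa using this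
  have m22 : X 0 0 * X 1 1 - X 0 1 * X 1 0 = 0 := by
    have := congrFun (congrFun ha 2) 2; simpa using this
  have m01 : -(X 0 1 * X 2 2) + X 0 2 * X 2 1 = 0 := by
    have := congrFun (congrFun ha 0) 1; simpa using this
  have m02 : X 0 1 * X 1 2 - X 0 2 * X 1 1 = 0 := by
    have := congrFun (congrFun ha 0) 2; simpa using this
  have m12 : -(X 0 0 * X 1 2) + X 0 2 * X 1 0 = 0 := by
    have := congrFun (congrFun ha 1) 2; simpa using this
  have m21 : -(X 0 0 * X 2 1) + X 0 1 * X 2 0 = 0 := by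
    have := congrFun (congrFun ha 2) 1; simpa using this
  have m10 : -(X 1 0 * X 2 2) + X 1 2 * X 2 0 = 0 := by
    have := congrFun (congrFun ha 1) 0; simpa using this
  have m20 : X 1 0 * X 2 1 - X 1 1 * X 2 0 = 0 := by
    have := congrFun (congrFun ha 2) 0; simpa using this
  -- helper to build the conclusion given a nonzero diagonal entry k and the identity
  have build : ∀ k : Fin 3, X k k ≠ 0 → (∀ i j : Fin 3, X k k * X i j = X i k * X j k) →
      ∃ (ε : ℝ) (v : Fin 3 → ℝ), (ε = 1 ∨ ε = -1) ∧ v ≠ 0 ∧ X = ε • vecMulVec v v := by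
    intro k hk hkey
    set a := X k k with hadef
    refine ⟨if 0 < a then 1 else -1, fun i => X i k / Real.sqrt |a|, by split <;> simp, ?_, ?_⟩
    · intro hv
      have := congrFun hv k
      simp only [Pi.zero_apply] at this
      have hs' : Real.sqrt |a| ≠ 0 := by
        positivity
      exact hk (by rw [div_eq_zero_iff] at this; exact this.resolve_right hs')
    · ext i j
      have hsq : Real.sqrt |a| * Real.sqrt |a| = |a| := Real.mul_self_sqrt (abs_nonneg a)
      have habs : |a| ≠ 0 := abs_ne_zero.mpr hk
      simp only [Matrix.smul_apply, vecMulVec_apply, smul_eq_mul]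
      rw [div_mul_div_comm, hsq]
      rcases lt_or_ge 0 a with hpos | hneg
      · rw [if_pos hpos, abs_of_pos hpos]
        have := hkey i j
        field_simp
        linarith [hkey i j]
      · have hneg' : a < 0 := lt_of_le_of_ne (le_of_not_gt (by intro h; exact absurd h (not_lt.mpr hneg))) hk
        rw [if_neg (not_lt.mpr hneg), abs_of_neg hneg']
        field_simp
        linarith [hkey i j]
  by_cases h00 : X 0 0 ≠ 0
  · refine build 0 h00 ?_
    intro i j
    fin_cases i <;> fin_cases j <;> simp only [Fin.zero_eta, Fin.mk_one, Fin.reduceFinMk]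
    · linear_combination - X 0 0 * e 0 1
    · linear_combination - X 0 0 * e 0 2
    · ring
    · linear_combination m22 - X 1 0 * e 0 1
    · linear_combination (-1) * m12 - X 1 0 * e 0 2
    · ring
    · linear_combination (-1) * m21 - X 2 0 * e 0 1
    · linear_combination m11 - X 2 0 * e 0 2
  · by_cases h11 : X 1 1 ≠ 0
    · refine build 1 h11 ?_
      intro i j
      fin_cases i <;> fin_cases j <;> simp only [Fin.zero_eta, Fin.mk_one, Fin.reduceFinMk]
      · linear_combination m22 + X 0 1 * e 0 1
      · ring
      · linear_combination (-1) * m02 - X 0 1 * e 1 2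
      · linear_combination X 1 1 * e 0 1
      · linear_combination - X 1 1 * e 1 2
      · linear_combination (-1) * m20 + X 2 1 * e 0 1
      · ring
      · linear_combination m00 - X 2 1 * e 1 2
    · by_cases h22 : X 2 2 ≠ 0
      · refine build 2 h22 ?_
        intro i j
        fin_cases i <;> fin_cases j <;> simp only [Fin.zero_eta, Fin.mk_one, Fin.reduceFinMk]
        · linear_combination m11 + X 0 2 * e 0 2
        · linear_combination (-1) * m01 + X 0 2 * e 1 2
        · ring
        · linear_combination (-1) * m10 + X 1 2 * e 0 2
        · linear_combination m00 + X 1 2 * e 1 2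
        · ring
        · linear_combination X 2 2 * e 0 2
        · linear_combination X 2 2 * e 1 2
      · exfalso
        push_neg at h00 h11 h22
        apply h0
        ext i j
        have z01 : X 0 1 = 0 := by
          have hq : X 0 1 * X 0 1 = 0 := by linear_combination -m22 + X 1 1 * h00 - X 0 1 * e 0 1
          exact mul_self_eq_zero.mp hq
        have z02 : X 0 2 = 0 := by
          have hq : X 0 2 * X 0 2 = 0 := by linear_combination -m11 + X 2 2 * h00 - X 0 2 * e 0 2
          exact mul_self_eq_zero.mp hq
        have z12 : X 1 2 = 0 := by
          have hq : X 1 2 * X 1 2 = 0 := by linear_combination -m00 + X 2 2 * h11 - X 1 2 * e 1 2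
          exact mul_self_eq_zero.mp hq
        fin_cases i <;> fin_cases j <;> simp only [Matrix.zero_apply, Fin.zero_eta, Fin.mk_one, Fin.reduceFinMk]
        · exact h00
        · exact z01
        · exact z02
        · exact (e 0 1).trans z01
        · exact h11
        · exact z12
        · exact (e 0 2).trans z02
        · exact (e 1 2).trans z12
        · exact h22

lemma det_lin_comb (l1 l2 l3 : ℝ) (u v w : Fin 3 → ℝ) :
    (l1 • vecMulVec u u + l2 • vecMulVec v v + l3 • vecMulVec w w).det
      = l1*l2*l3 * ((Matrix.of ![u, v, w]).det)^2 := by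
  rw [det_fin_three, det_fin_three]
  simp only [Matrix.add_apply, Matrix.smul_apply, vecMulVec_apply, smul_eq_mul, of_apply,
    cons_val', cons_val_zero, cons_val_one, head_cons, empty_val',
    cons_val_fin_one, head_fin_const, cons_val_two, tail_cons]
  ring

def symOf (v : Fin 3 → ℝ) : SymR3 := ⟨vecMulVec v v, vecMulVec_symm v⟩

lemma symOf_ne_zero {v : Fin 3 → ℝ} (hv : v ≠ 0) : symOf v ≠ 0 := by
  intro h
  exact vecMulVec_ne_zero hv (congrArg Subtype.val h)

lemma sign_chase {e0 e1 e2 eg ev : ℝ}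
    (s0 : e0 = 1 ∨ e0 = -1) (s1 : e1 = 1 ∨ e1 = -1) (s2 : e2 = 1 ∨ e2 = -1)
    (sg : eg = 1 ∨ eg = -1) (sv : ev = 1 ∨ ev = -1)
    (h01 : e0*e1*eg = 1) (h02 : e0*e2*eg = 1) (h12 : e1*e2*eg = 1)
    (hv : e1*e2*ev = 1 ∨ e0*e2*ev = 1 ∨ e0*e1*ev = 1) : ev = 1 := by
  rcases s0 with rfl | rfl <;> rcases s1 with rfl | rfl <;> rcases s2 with rfl | rfl <;>
    rcases sg with rfl | rfl <;> rcases sv with rfl | rfl <;>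
    rcases hv with hv | hv | hv <;> linarith

lemma image_rank_one (α : SymR3 ≃ₗ[ℝ] SymR3)
    (hα : ∀ X : SymR3, ((α X : Mat)).det = ((X : Mat)).det) :
    ∀ v : Fin 3 → ℝ, v ≠ 0 → ∃ w : Fin 3 → ℝ, w ≠ 0 ∧ (α (symOf v) : Mat) = vecMulVec w w := by
  have H : ∀ v : Fin 3 → ℝ, v ≠ 0 → ∃ (ε : ℝ) (w : Fin 3 → ℝ),
      (ε = 1 ∨ ε = -1) ∧ w ≠ 0 ∧ (α (symOf v) : Mat) = ε • vecMulVec w w := by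
    intro v hv
    have hsym : ((α (symOf v) : Mat))ᵀ = (α (symOf v) : Mat) := (α (symOf v)).2
    have hadj : (α (symOf v) : Mat).adjugate = 0 :=
      adj_zero_transfer α hα (symOf v) (adjugate_vecMulVec v)
    have hne : (α (symOf v) : Mat) ≠ 0 := by
      intro h
      have : α (symOf v) = 0 := Subtype.ext h
      have : symOf v = 0 := by
        have := congrArg α.symm this
        simpa using this
      exact symOf_ne_zero hv this
    exact rank_one_of_adj_zero hsym hadj hne
  choose ε w hε hw himg using H
  -- determinant relation for triples
  have key : ∀ (u : Fin 3 → ℝ) (hu : u ≠ 0) (v : Fin 3 → ℝ) (hv : v ≠ 0)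
      (z : Fin 3 → ℝ) (hz : z ≠ 0),
      ((Matrix.of ![u, v, z]).det)^2
        = ε u hu * ε v hv * ε z hz * ((Matrix.of ![w u hu, w v hv, w z hz]).det)^2 := by
    intro u hu v hv z hz
    have hsum : ((α (symOf u + symOf v + symOf z) : SymR3) : Mat)
        = ε u hu • vecMulVec (w u hu) (w u hu) + ε v hv • vecMulVec (w v hv) (w v hv)
          + ε z hz • vecMulVec (w z hz) (w z hz) := by
      rw [map_add, map_add, Submodule.coe_add, Submodule.coe_add,
        himg u hu, himg v hv, himg z hz]
    have h1 : ((symOf u + symOf v + symOf z : SymR3) : Mat).det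
        = ((Matrix.of ![u, v, z]).det)^2 := by
      rw [Submodule.coe_add, Submodule.coe_add]
      show (vecMulVec u u + vecMulVec v v + vecMulVec z z).det = _
      have := det_lin_comb 1 1 1 u v z
      simpa using this
    have h2 := hα (symOf u + symOf v + symOf z)
    rw [hsum, h1] at h2
    rw [← h2, det_lin_comb]
  have signs : ∀ (u : Fin 3 → ℝ) (hu : u ≠ 0) (v : Fin 3 → ℝ) (hv : v ≠ 0)
      (z : Fin 3 → ℝ) (hz : z ≠ 0), (Matrix.of ![u, v, z]).det ≠ 0 →
      ε u hu * ε v hv * ε z hz = 1 := by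
    intro u hu v hv z hz hd
    have hk := key u hu v hv z hz
    have hpos : 0 < ((Matrix.of ![u, v, z]).det)^2 :=
      lt_of_le_of_ne (sq_nonneg _) (Ne.symm (pow_ne_zero 2 hd))
    have hsq : 0 ≤ ((Matrix.of ![w u hu, w v hv, w z hz]).det)^2 := sq_nonneg _
    rcases hε u hu with h1 | h1 <;> rcases hε v hv with h2 | h2 <;>
      rcases hε z hz with h3 | h3 <;> rw [h1, h2, h3] at hk ⊢ <;> nlinarith [hk, hpos, hsq]
  -- special vectors
  intro v hv
  set g : Fin 3 → ℝ := fun _ => 1 with hgdef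
  have hg : g ≠ 0 := by
    intro h; have := congrFun h 0; simp [hgdef] at this
  have he : ∀ i : Fin 3, (Pi.single i 1 : Fin 3 → ℝ) ≠ 0 := by
    intro i h
    have := congrFun h i
    simp at this
  have d01g : (Matrix.of ![(Pi.single 0 1 : Fin 3 → ℝ), Pi.single 1 1, g]).det ≠ 0 := by
    rw [det_fin_three]
    simp [Pi.single_apply, hgdef]
  have d02g : (Matrix.of ![(Pi.single 0 1 : Fin 3 → ℝ), Pi.single 2 1, g]).det ≠ 0 := by
    rw [det_fin_three]
    simp [Pi.single_apply, hgdef]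
  have d12g : (Matrix.of ![(Pi.single 1 1 : Fin 3 → ℝ), Pi.single 2 1, g]).det ≠ 0 := by
    rw [det_fin_three]
    simp [Pi.single_apply, hgdef]
  have h01 := signs _ (he 0) _ (he 1) g hg d01g
  have h02 := signs _ (he 0) _ (he 2) g hg d02g
  have h12 := signs _ (he 1) _ (he 2) g hg d12g
  have hεv : ε v hv = 1 := by
    have hvi : v 0 ≠ 0 ∨ v 1 ≠ 0 ∨ v 2 ≠ 0 := by
      by_contra h
      push_neg at h
      apply hv
      funext i
      fin_cases i <;> simp [h.1, h.2.1, h.2.2]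
    rcases hvi with hk | hk | hk
    · have hd : (Matrix.of ![(Pi.single 1 1 : Fin 3 → ℝ), Pi.single 2 1, v]).det ≠ 0 := by
        rw [det_fin_three]; simp [Pi.single_apply]; exact hk
      have h := signs _ (he 1) _ (he 2) v hv hd
      exact sign_chase (hε _ (he 0)) (hε _ (he 1)) (hε _ (he 2)) (hε g hg) (hε v hv)
        h01 h02 h12 (Or.inl h)
    · have hd : (Matrix.of ![(Pi.single 0 1 : Fin 3 → ℝ), Pi.single 2 1, v]).det ≠ 0 := by
        rw [det_fin_three]; simp [Pi.single_apply]; exact hk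
      have h := signs _ (he 0) _ (he 2) v hv hd
      exact sign_chase (hε _ (he 0)) (hε _ (he 1)) (hε _ (he 2)) (hε g hg) (hε v hv)
        h01 h02 h12 (Or.inr (Or.inl h))
    · have hd : (Matrix.of ![(Pi.single 0 1 : Fin 3 → ℝ), Pi.single 1 1, v]).det ≠ 0 := by
        rw [det_fin_three]; simp [Pi.single_apply]; exact hk
      have h := signs _ (he 0) _ (he 1) v hv hd
      exact sign_chase (hε _ (he 0)) (hε _ (he 1)) (hε _ (he 2)) (hε g hg) (hε v hv)
        h01 h02 h12 (Or.inr (Or.inr h))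
  refine ⟨w v hv, hw v hv, ?_⟩
  rw [himg v hv, hεv, one_smul]

lemma fin3_mk_two (h : (2:ℕ) < 3) : (⟨2, h⟩ : Fin 3) = (2 : Fin 3) := rfl

-- basis elements
def E (i : Fin 3) : Mat := vecMulVec (Pi.single i 1) (Pi.single i 1)
def Es (i : Fin 3) : SymR3 := ⟨E i, vecMulVec_symm _⟩
def one3 : SymR3 := ⟨1, Matrix.transpose_one⟩
def v01 : Fin 3 → ℝ := Pi.single 0 1 + Pi.single 1 1
def v02 : Fin 3 → ℝ := Pi.single 0 1 + Pi.single 2 1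
def v12 : Fin 3 → ℝ := Pi.single 1 1 + Pi.single 2 1

lemma E_apply (i r s : Fin 3) :
    E i r s = (if r = i then (1:ℝ) else 0) * (if s = i then 1 else 0) := by
  simp [E, vecMulVec_apply, Pi.single_apply]

lemma hsingle_ne (i : Fin 3) : (Pi.single i 1 : Fin 3 → ℝ) ≠ 0 := by
  intro h
  have := congrFun h i
  simp at this

lemma v01_ne : v01 ≠ 0 := by
  intro h; have := congrFun h 0; simp [v01, Pi.single_apply] at this
lemma v02_ne : v02 ≠ 0 := by
  intro h; have := congrFun h 0; simp [v02, Pi.single_apply] at this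
lemma v12_ne : v12 ≠ 0 := by
  intro h; have := congrFun h 1; simp [v12, Pi.single_apply] at this

lemma sum_Es : Es 0 + Es 1 + Es 2 = one3 := by
  apply Subtype.ext
  show E 0 + E 1 + E 2 = (1 : Mat)
  ext r s
  fin_cases r <;> fin_cases s <;>
    simp [E_apply, Matrix.one_apply]

lemma neg_vecMulVec (v : Fin 3 → ℝ) : vecMulVec (-v) (-v) = vecMulVec v v := by
  ext r s; simp [vecMulVec_apply]

lemma det_neg_row (u v w : Fin 3 → ℝ) :
    (Matrix.of ![-u, v, w]).det = -(Matrix.of ![u, v, w]).det := by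
  rw [det_fin_three, det_fin_three]
  simp only [of_apply, cons_val', cons_val_zero, cons_val_one, head_cons, empty_val',
    cons_val_fin_one, head_fin_const, cons_val_two, tail_cons, Pi.neg_apply]
  ring

-- the span lemma
lemma span_six (γ δ : SymR3 ≃ₗ[ℝ] SymR3)
    (h0 : γ (Es 0) = δ (Es 0)) (h1 : γ (Es 1) = δ (Es 1)) (h2 : γ (Es 2) = δ (Es 2))
    (h01 : γ (symOf v01) = δ (symOf v01)) (h02 : γ (symOf v02) = δ (symOf v02))
    (h12 : γ (symOf v12) = δ (symOf v12)) : γ = δ := by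
  apply LinearEquiv.toLinearMap_injective
  apply LinearMap.ext
  intro X
  have e : ∀ i j : Fin 3, (X : Mat) j i = (X : Mat) i j :=
    fun i j => congrFun (congrFun X.2 i) j
  have hdec : X = ((X:Mat) 0 0 - (X:Mat) 0 1 - (X:Mat) 0 2) • Es 0
      + ((X:Mat) 1 1 - (X:Mat) 0 1 - (X:Mat) 1 2) • Es 1
      + ((X:Mat) 2 2 - (X:Mat) 0 2 - (X:Mat) 1 2) • Es 2
      + (X:Mat) 0 1 • symOf v01 + (X:Mat) 0 2 • symOf v02 + (X:Mat) 1 2 • symOf v12 := by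
    apply Subtype.ext
    show (X : Mat) = _
    ext r s
    simp only [Submodule.coe_add, Submodule.coe_smul, Matrix.add_apply, Matrix.smul_apply, smul_eq_mul]
    show (X:Mat) r s = _ * E 0 r s + _ * E 1 r s + _ * E 2 r s
      + _ * (vecMulVec v01 v01) r s + _ * (vecMulVec v02 v02) r s + _ * (vecMulVec v12 v12) r s
    fin_cases r <;> fin_cases s <;>
      simp only [E_apply, vecMulVec_apply, v01, v02, v12, Pi.add_apply, Pi.single_apply,
        Fin.zero_eta, Fin.mk_one, Fin.reduceFinMk] <;>
      norm_num [Fin.ext_iff]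
    all_goals try ring
    all_goals try exact e 0 1
    all_goals try exact e 0 2
    all_goals try exact e 1 2
  have happ : ∀ (τ : SymR3 ≃ₗ[ℝ] SymR3), τ X
      = ((X:Mat) 0 0 - (X:Mat) 0 1 - (X:Mat) 0 2) • τ (Es 0)
      + ((X:Mat) 1 1 - (X:Mat) 0 1 - (X:Mat) 1 2) • τ (Es 1)
      + ((X:Mat) 2 2 - (X:Mat) 0 2 - (X:Mat) 1 2) • τ (Es 2)
      + (X:Mat) 0 1 • τ (symOf v01) + (X:Mat) 0 2 • τ (symOf v02) + (X:Mat) 1 2 • τ (symOf v12) := by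
    intro τ
    conv_lhs => rw [hdec]
    simp only [map_add, LinearEquiv.map_smul]
  show γ X = δ X
  rw [happ γ, happ δ, h0, h1, h2, h01, h02, h12]

set_option maxHeartbeats 2000000 in
lemma surj_dir (α : SymR3 ≃ₗ[ℝ] SymR3)
    (hα : ∀ X : SymR3, ((α X : Mat)).det = ((X : Mat)).det) : α ∈ Set.range f := by
  -- images of the diagonal basis
  obtain ⟨w0, hw0, h0img⟩ := image_rank_one α hα (Pi.single 0 1) (hsingle_ne 0)
  obtain ⟨w1, hw1, h1img⟩ := image_rank_one α hα (Pi.single 1 1) (hsingle_ne 1)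
  obtain ⟨w2, hw2, h2img⟩ := image_rank_one α hα (Pi.single 2 1) (hsingle_ne 2)
  have hEsym : ∀ i : Fin 3, symOf (Pi.single i 1) = Es i := fun i => rfl
  have hone : ((α one3 : Mat)).det = 1 := by
    rw [hα one3]
    show (1 : Mat).det = 1
    simp
  have hsum : (α one3 : Mat) = vecMulVec w0 w0 + vecMulVec w1 w1 + vecMulVec w2 w2 := by
    rw [← sum_Es, map_add, map_add, Submodule.coe_add, Submodule.coe_add,
      ← hEsym 0, ← hEsym 1, ← hEsym 2, h0img, h1img, h2img]
  have hdet2 : ((Matrix.of ![w0, w1, w2]).det)^2 = 1 := by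
    have := det_lin_comb 1 1 1 w0 w1 w2
    simp only [one_smul, one_mul] at this
    rw [← this, ← hsum, hone]
  -- normalize sign to get an SL3 matrix
  obtain ⟨u0, u1, u2, hu0, hu1, hu2, hud⟩ : ∃ u0 u1 u2 : Fin 3 → ℝ,
      (α (Es 0) : Mat) = vecMulVec u0 u0 ∧ (α (Es 1) : Mat) = vecMulVec u1 u1 ∧
      (α (Es 2) : Mat) = vecMulVec u2 u2 ∧ (Matrix.of ![u0, u1, u2]).det = 1 := by
    have hd1 : (Matrix.of ![w0, w1, w2]).det = 1 ∨ (Matrix.of ![w0, w1, w2]).det = -1 := by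
      have h := hdet2
      rcases mul_eq_zero.mp (show ((Matrix.of ![w0,w1,w2]).det - 1) * ((Matrix.of ![w0,w1,w2]).det + 1) = 0 by nlinarith [h]) with hc | hc
      · left; linarith
      · right; linarith
    rcases hd1 with hd | hd
    · exact ⟨w0, w1, w2, h0img, h1img, h2img, hd⟩
    · refine ⟨-w0, w1, w2, ?_, h1img, h2img, ?_⟩
      · rw [neg_vecMulVec]; exact h0img
      · rw [det_neg_row, hd]; norm_num
  set N : Mat := Matrix.of ![u0, u1, u2] with hN
  have hNdet : Nᵀ.det = 1 := by rw [det_transpose]; exact hud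
  set A : Matrix.SpecialLinearGroup (Fin 3) ℝ := ⟨Nᵀ, hNdet⟩ with hA
  have hAcoe : (A : Mat) = Nᵀ := rfl
  -- f A agrees with α on the Es i
  have hNentry : ∀ s : Fin 3, N 0 s = u0 s ∧ N 1 s = u1 s ∧ N 2 s = u2 s := by
    intro s
    refine ⟨rfl, rfl, rfl⟩
  have hfA : ∀ i : Fin 3, f A (Es i) = α (Es i) := by
    intro i
    apply Subtype.ext
    rw [f_apply, hAcoe, transpose_transpose]
    show Nᵀ * E i * N = _
    have key : Nᵀ * E i * N = vecMulVec (fun r => N i r) (fun r => N i r) := by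
      ext r s
      simp only [mul_apply, Fin.sum_univ_three, transpose_apply, E_apply, vecMulVec_apply]
      fin_cases i <;> norm_num [Fin.ext_iff, mul_comm] <;> try rfl
    rw [key]
    fin_cases i
    · exact hu0.symm
    · exact hu1.symm
    · exact hu2.symm
  -- the normalized map
  set β : SymR3 ≃ₗ[ℝ] SymR3 := α.trans (f A).symm with hβ
  have hβapp : ∀ X : SymR3, β X = (f A).symm (α X) := fun X => rfl
  have hβdet : ∀ X : SymR3, ((β X : Mat)).det = ((X : Mat)).det := by
    intro X
    have h1 : f A (β X) = α X := by
      rw [hβapp]; exact LinearEquiv.apply_symm_apply _ _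
    have := det_f A (β X)
    rw [h1, hα] at this
    exact this.symm
  have hβE : ∀ i : Fin 3, β (Es i) = Es i := by
    intro i
    rw [hβapp, ← hfA i]
    exact LinearEquiv.symm_apply_apply _ _
  -- diagonal entries are preserved by β
  have hadjE : ∀ i j k : Fin 3, j ≠ k → i ≠ j → i ≠ k →
      (E j + E k).adjugate = E i := by
    intro i j k hjk hij hik
    fin_cases i <;> fin_cases j <;> fin_cases k <;> simp_all <;>
      (rw [adjugate_fin_three]; ext r s; fin_cases r <;> fin_cases s <;>
        norm_num [E_apply, Matrix.add_apply, Fin.ext_iff])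
  have htraceE : ∀ (i : Fin 3) (M : Mat), (E i * M).trace = M i i := by
    intro i M
    rw [trace_fin_three]
    simp only [mul_apply, Fin.sum_univ_three, E_apply]
    fin_cases i <;> norm_num [Fin.ext_iff] <;> try rfl
  have hdiag : ∀ (Y : SymR3) (i : Fin 3), (β Y : Mat) i i = (Y : Mat) i i := by
    intro Y i
    obtain ⟨j, k, hjk, hij, hik⟩ : ∃ j k : Fin 3, j ≠ k ∧ i ≠ j ∧ i ≠ k := by
      fin_cases i
      · exact ⟨1, 2, by decide, by decide, by decide⟩
      · exact ⟨0, 2, by decide, by decide, by decide⟩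
      · exact ⟨0, 1, by decide, by decide, by decide⟩
    have hmem : E j + E k ∈ SymR3 :=
      Submodule.add_mem _ (vecMulVec_symm _) (vecMulVec_symm _)
    have hEjk : (⟨E j + E k, hmem⟩ : SymR3) = Es j + Es k := Subtype.ext rfl
    have hβjk : β (⟨E j + E k, hmem⟩ : SymR3) = ⟨E j + E k, hmem⟩ := by
      rw [hEjk, map_add, hβE j, hβE k]
    have hp := pairing_preserved β hβdet (⟨E j + E k, hmem⟩ : SymR3) Y
    rw [hβjk] at hp
    show (β Y : Mat) i i = (Y : Mat) i i
    have hadj : ((⟨E j + E k, hmem⟩ : SymR3) : Mat).adjugate = E i := hadjE i j k hjk hij hik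
    rw [hadj] at hp
    rw [htraceE i, htraceE i] at hp
    exact hp
  -- images of the three off-diagonal generators
  obtain ⟨p, hp, hpimg⟩ := image_rank_one β hβdet v01 v01_ne
  obtain ⟨q, hq, hqimg⟩ := image_rank_one β hβdet v02 v02_ne
  obtain ⟨r, hr, hrimg⟩ := image_rank_one β hβdet v12 v12_ne
  have hvd : ∀ (v w : Fin 3 → ℝ),
      (β (symOf v) : Mat) = vecMulVec w w → ∀ l, w l * w l = v l * v l := by
    intro v w himg l
    have h := hdiag (symOf v) l
    rw [himg] at h
    simpa [vecMulVec_apply, symOf] using h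
  have hp0 : p 0 * p 0 = 1 := by
    have := hvd v01 p hpimg 0; simpa [v01, Pi.single_apply] using this
  have hp1 : p 1 * p 1 = 1 := by
    have := hvd v01 p hpimg 1; simpa [v01, Pi.single_apply] using this
  have hp2' : p 2 = 0 := by
    have := hvd v01 p hpimg 2
    simp [v01, Pi.single_apply] at this
    exact mul_self_eq_zero.mp (by simpa using this)
  have hq0 : q 0 * q 0 = 1 := by
    have := hvd v02 q hqimg 0; simpa [v02, Pi.single_apply] using this
  have hq2 : q 2 * q 2 = 1 := by
    have := hvd v02 q hqimg 2; simpa [v02, Pi.single_apply] using this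
  have hq1' : q 1 = 0 := by
    have := hvd v02 q hqimg 1
    simp [v02, Pi.single_apply] at this
    exact mul_self_eq_zero.mp (by simpa using this)
  have hr1 : r 1 * r 1 = 1 := by
    have := hvd v12 r hrimg 1; simpa [v12, Pi.single_apply] using this
  have hr2 : r 2 * r 2 = 1 := by
    have := hvd v12 r hrimg 2; simpa [v12, Pi.single_apply] using this
  have hr0' : r 0 = 0 := by
    have := hvd v12 r hrimg 0
    simp [v12, Pi.single_apply] at this
    exact mul_self_eq_zero.mp (by simpa using this)
  -- the product of signs is 1
  have hsum3 : ((symOf v01 + symOf v02 + symOf v12 : SymR3) : Mat).det = 4 := by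
    have hco : ((symOf v01 + symOf v02 + symOf v12 : SymR3) : Mat)
        = vecMulVec v01 v01 + vecMulVec v02 v02 + vecMulVec v12 v12 := by
      rw [Submodule.coe_add, Submodule.coe_add]; rfl
    rw [hco, det_fin_three]
    norm_num [Matrix.add_apply, vecMulVec_apply, v01, v02, v12, Pi.single_apply, Pi.add_apply, Fin.ext_iff]
  have hβ3 : (β (symOf v01 + symOf v02 + symOf v12) : Mat)
      = vecMulVec p p + vecMulVec q q + vecMulVec r r := by
    rw [map_add, map_add, Submodule.coe_add, Submodule.coe_add, hpimg, hqimg, hrimg]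
  have hdetW : ((Matrix.of ![p, q, r]).det)^2 = 4 := by
    have h := hβdet (symOf v01 + symOf v02 + symOf v12)
    rw [hβ3, hsum3] at h
    have h2 := det_lin_comb 1 1 1 p q r
    simp only [one_smul, one_mul] at h2
    rw [h2] at h
    exact h
  have hdetN : (Matrix.of ![p, q, r]).det = -(p 0 * q 2 * r 1 + p 1 * q 0 * r 2) := by
    rw [det_fin_three]
    simp only [of_apply, cons_val', cons_val_zero, cons_val_one, head_cons, empty_val',
      cons_val_fin_one, head_fin_const, cons_val_two, tail_cons]
    rw [hp2', hq1', hr0']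
    ring
  have h4 : (p 0 * q 2 * r 1 + p 1 * q 0 * r 2)^2 = 4 := by
    rw [hdetN] at hdetW
    nlinarith [hdetW]
  have hprod : (p 0 * p 1) * (q 0 * q 2) * (r 1 * r 2) = 1 := by
    linear_combination (1/2)*h4 - (1/2)*(q 2*q 2*r 1*r 1)*hp0 - (1/2)*(r 1*r 1)*hq2
      - (1/2)*hr1 - (1/2)*(q 0*q 0*r 2*r 2)*hp1 - (1/2)*(r 2*r 2)*hq0 - (1/2)*hr2
  -- the diagonal sign matrix
  set d : Fin 3 → ℝ := ![r 1 * r 2, (r 1 * r 2) * (p 0 * p 1), (r 1 * r 2) * (q 0 * q 2)] with hd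
  have hd0 : d 0 = r 1 * r 2 := rfl
  have hd1 : d 1 = (r 1 * r 2) * (p 0 * p 1) := rfl
  have hd2' : d 2 = (r 1 * r 2) * (q 0 * q 2) := rfl
  have hdetC : (Matrix.diagonal d).det = 1 := by
    rw [det_diagonal, Fin.prod_univ_three, hd0, hd1, hd2']
    linear_combination ((r 1 * r 2)*(r 1 * r 2))*hprod + (r 2*r 2)*hr1 + hr2
  set C : Matrix.SpecialLinearGroup (Fin 3) ℝ := ⟨Matrix.diagonal d, hdetC⟩ with hC
  have hCcoe : (C : Mat) = Matrix.diagonal d := rfl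
  have hCform : ∀ v : Fin 3 → ℝ, (f C (symOf v) : Mat)
      = vecMulVec (fun i => d i * v i) (fun i => d i * v i) := by
    intro v
    rw [f_apply, hCcoe, Matrix.diagonal_transpose]
    show Matrix.diagonal d * vecMulVec v v * Matrix.diagonal d = _
    ext a b
    simp [Matrix.mul_diagonal, Matrix.diagonal_mul, vecMulVec_apply]
    ring
  have hagE : ∀ i : Fin 3, f C (Es i) = β (Es i) := by
    intro i
    rw [hβE i]
    apply Subtype.ext
    have h : Es i = symOf (Pi.single i 1) := rfl
    rw [h, hCform]
    show _ = E i
    ext a b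
    fin_cases i <;> fin_cases a <;> fin_cases b <;>
      norm_num +decide [E_apply, vecMulVec_apply, Pi.single_apply, Fin.zero_eta, Fin.mk_one, fin3_mk_two, hd0, hd1, hd2']
    all_goals try linear_combination (r 2*r 2)*hr1 + hr2
    all_goals try linear_combination (r 2*r 2*p 0*p 0*p 1*p 1)*hr1 + (p 0*p 0*p 1*p 1)*hr2
      + (p 1*p 1)*hp0 + hp1
    all_goals try linear_combination (r 2*r 2*q 0*q 0*q 2*q 2)*hr1 + (q 0*q 0*q 2*q 2)*hr2
      + (q 2*q 2)*hq0 + hq2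
  have hag01 : f C (symOf v01) = β (symOf v01) := by
    apply Subtype.ext
    rw [hCform, hpimg]
    ext a b
    fin_cases a <;> fin_cases b <;>
      norm_num +decide [vecMulVec_apply, v01, Pi.add_apply, Pi.single_apply, Fin.zero_eta, Fin.mk_one, fin3_mk_two, hd0, hd1, hd2', hp2']
    all_goals try exact hp2'
    all_goals try exact Or.inl hp2'
    all_goals try exact Or.inr hp2'
    all_goals try linear_combination (r 2*r 2)*hr1 + hr2 - hp0
    all_goals try linear_combination (p 0*p 1*r 2*r 2)*hr1 + (p 0*p 1)*hr2
    all_goals try linear_combination (r 2*r 2*p 0*p 0*p 1*p 1)*hr1 + (p 0*p 0*p 1*p 1)*hr2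
      + (p 1*p 1)*hp0
  have hag02 : f C (symOf v02) = β (symOf v02) := by
    apply Subtype.ext
    rw [hCform, hqimg]
    ext a b
    fin_cases a <;> fin_cases b <;>
      norm_num +decide [vecMulVec_apply, v02, Pi.add_apply, Pi.single_apply, Fin.zero_eta, Fin.mk_one, fin3_mk_two, hd0, hd1, hd2', hq1']
    all_goals try exact hq1'
    all_goals try exact Or.inl hq1'
    all_goals try exact Or.inr hq1'
    all_goals try linear_combination (r 2*r 2)*hr1 + hr2 - hq0
    all_goals try linear_combination (q 0*q 2*r 2*r 2)*hr1 + (q 0*q 2)*hr2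
    all_goals try linear_combination (r 2*r 2*q 0*q 0*q 2*q 2)*hr1 + (q 0*q 0*q 2*q 2)*hr2
      + (q 2*q 2)*hq0
  have hag12 : f C (symOf v12) = β (symOf v12) := by
    apply Subtype.ext
    rw [hCform, hrimg]
    ext a b
    fin_cases a <;> fin_cases b <;>
      norm_num [vecMulVec_apply, v12, Pi.add_apply, Pi.single_apply, Fin.ext_iff, Fin.zero_eta, Fin.mk_one, fin3_mk_two, hd0, hd1, hd2', hr0']
    all_goals try exact hr0'
    all_goals try exact Or.inl hr0'
    all_goals try exact Or.inr hr0'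
    all_goals try linear_combination (r 1*r 1*p 0*p 0*p 1*p 1)*hr2 + (r 1*r 1*p 1*p 1)*hp0
      + (r 1*r 1)*hp1
    all_goals try linear_combination (r 1*r 2)*hprod
    all_goals try linear_combination (r 2*r 2*q 0*q 0*q 2*q 2)*hr1 + (r 2*r 2*q 2*q 2)*hq0
      + (r 2*r 2)*hq2
  have hβC : f C = β :=
    span_six (f C) β (hagE 0) (hagE 1) (hagE 2) hag01 hag02 hag12
  refine ⟨A * C, ?_⟩
  apply LinearEquiv.toLinearMap_injective
  apply LinearMap.ext
  intro X
  show f (A * C) X = α X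
  rw [f_mul_apply, hβC]
  rw [hβapp]
  exact LinearEquiv.apply_symm_apply _ _


lemma f_injective : Function.Injective f := by
  rw [injective_iff_map_eq_one]
  intro Asl hAsl
  have h : ∀ X : Mat, Xᵀ = X → (Asl : Mat) * X * (Asl : Mat)ᵀ = X := by
    intro X hX
    have h1 : f Asl ⟨X, hX⟩ = ⟨X, hX⟩ := by rw [hAsl]; rfl
    have := congrArg (fun Z : SymR3 => (Z : Mat)) h1
    simpa [f_apply] using this
  apply Subtype.ext
  show (Asl : Mat) = 1
  set A : Mat := (Asl : Mat) with hA
  have hd : A.det = 1 := Asl.2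
  have hE : ∀ i : Fin 3, A * (vecMulVec (Pi.single i 1) (Pi.single i 1)) * Aᵀ
      = vecMulVec (Pi.single i 1) (Pi.single i 1) := by
    intro i
    apply h
    ext r s
    simp [vecMulVec_apply, mul_comm]
  have hent : ∀ i r s : Fin 3, A r i * A s i = (if r = i then (1:ℝ) else 0) * (if s = i then 1 else 0) := by
    intro i r s
    have := congrFun (congrFun (hE i) r) s
    simpa [vecMulVec_apply, mul_apply, Fin.sum_univ_three, Pi.single_apply, transpose_apply] using this
  have hdiag : ∀ i r : Fin 3, r ≠ i → A r i = 0 := by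
    intro i r hri
    have := hent i r r
    simp [hri] at this
    nlinarith [this]
  have hsq : ∀ i : Fin 3, A i i ^2 = 1 := by
    intro i
    have := hent i i i
    simp at this
    nlinarith [this]
  -- off diagonal via F01
  have hF : A * (Matrix.of ![![0,1,0],![1,0,0],![0,0,0]] : Matrix (Fin 3) (Fin 3) ℝ) * Aᵀ
      = Matrix.of ![![0,1,0],![1,0,0],![0,0,0]] := by
    apply h
    ext r s
    fin_cases r <;> fin_cases s <;> simp [Matrix.vecHead, Matrix.vecTail]
  have h01 : A 0 0 * A 1 1 + A 0 1 * A 1 0 = 1 := by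
    have := congrFun (congrFun hF 0) 1
    simp [mul_apply, Fin.sum_univ_three, transpose_apply] at this
    linarith [this]
  have z01 : A 0 1 = 0 := hdiag 1 0 (by decide)
  have z10 : A 1 0 = 0 := hdiag 0 1 (by decide)
  have hF2 : A * (Matrix.of ![![0,0,1],![0,0,0],![1,0,0]] : Matrix (Fin 3) (Fin 3) ℝ) * Aᵀ
      = Matrix.of ![![0,0,1],![0,0,0],![1,0,0]] := by
    apply h
    ext r s
    fin_cases r <;> fin_cases s <;> simp [Matrix.vecHead, Matrix.vecTail]
  have h02 : A 0 0 * A 2 2 + A 0 2 * A 2 0 = 1 := by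
    have := congrFun (congrFun hF2 0) 2
    simp [mul_apply, Fin.sum_univ_three, transpose_apply] at this
    linarith [this]
  have z02 : A 0 2 = 0 := hdiag 2 0 (by decide)
  have z20 : A 2 0 = 0 := hdiag 0 2 (by decide)
  have z12 : A 1 2 = 0 := hdiag 2 1 (by decide)
  have z21 : A 2 1 = 0 := hdiag 1 2 (by decide)
  have hdet : A 0 0 * A 1 1 * A 2 2 = 1 := by
    have := hd
    rw [det_fin_three] at this
    rw [z01, z10, z02, z20, z12, z21] at this
    linarith [this]
  have hcase : (A 0 0 - 1) * (A 0 0 + 1) = 0 := by have := hsq 0; nlinarith [this]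
  have h00 : A 0 0 = 1 := by
    rcases mul_eq_zero.mp hcase with hc | hc
    · linarith
    · exfalso
      have ha : A 0 0 = -1 := by linarith
      rw [ha, z01, z10] at h01
      rw [ha, z02, z20] at h02
      have h11 : A 1 1 = -1 := by nlinarith [h01]
      have h22 : A 2 2 = -1 := by nlinarith [h02]
      rw [ha, h11, h22] at hdet
      norm_num at hdet
  have h11 : A 1 1 = 1 := by rw [h00, z01, z10] at h01; nlinarith [h01]
  have h22 : A 2 2 = 1 := by rw [h00, z02, z20] at h02; nlinarith [h02]
  ext r s
  fin_cases r <;> fin_cases s <;>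
    simp [z01, z10, z02, z20, z12, z21, h00, h11, h22, Matrix.one_apply]

end Stmt5

/-- the map `A ↦ (X ↦ A X ᵗA)` is a well-defined group isomorphism from
`SL(3,ℝ)` onto `E₆₍₋₂₆₎,ℝ`, the group of ℝ-linear automorphisms of `J(3,ℝ)` preserving
the determinant. -/
theorem stmt_5 :
    ∃ f : Matrix.SpecialLinearGroup (Fin 3) ℝ →* (SymR3 ≃ₗ[ℝ] SymR3),
      (∀ (A : Matrix.SpecialLinearGroup (Fin 3) ℝ) (X : SymR3),
          ((f A) X : Matrix (Fin 3) (Fin 3) ℝ) =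
            (A : Matrix (Fin 3) (Fin 3) ℝ) * (X : Matrix (Fin 3) (Fin 3) ℝ) *
              (A : Matrix (Fin 3) (Fin 3) ℝ)ᵀ) ∧
      Function.Injective f ∧
      (∀ α : SymR3 ≃ₗ[ℝ] SymR3,
        (∀ X : SymR3, ((α X : Matrix (Fin 3) (Fin 3) ℝ)).det
            = ((X : Matrix (Fin 3) (Fin 3) ℝ)).det) ↔ α ∈ Set.range f) := by
  refine ⟨Stmt5.f, fun A X => rfl, Stmt5.f_injective, ?_⟩
  intro α
  constructor
  · exact fun hα => Stmt5.surj_dir α hα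
  · rintro ⟨A, rfl⟩ X
    exact Stmt5.det_f A X
end
end

section
/- Let X ∈ J(3,ℂ^C) satisfy X∘X = X and tr(X) = 1. Then for each i ∈ {1,2,3} there exists B ∈ U(3,ℂ^C) such that B*·X·B = E_i. -/
open Matrix TensorProduct

noncomputable section

/-- `𝔄 = ℂ ⊗_ℝ ℂ`, regarded as an algebra over the scalar field `ℂ` acting through the
first tensor factor. -/
abbrev CC : Type := ℂ ⊗[ℝ] ℂ

/-- `e₁`, the imaginary unit of the non-scalar tensor factor. -/
def e1 : CC := (1 : ℂ) ⊗ₜ[ℝ] Complex.I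

/-- The conjugation `x ↦ x̄` of `𝔄`: the `ℂ`-linear ring involution with `ē₁ = −e₁`. -/
def barA : CC →ₐ[ℂ] CC :=
  Algebra.TensorProduct.map (AlgHom.id ℂ ℂ) Complex.conjAe.toAlgHom

/-- `τ`: the conjugate-linear ring involution of `𝔄` fixing the non-scalar factor. -/
def tauA : CC →ₐ[ℝ] CC :=
  Algebra.TensorProduct.map Complex.conjAe.toAlgHom (AlgHom.id ℝ ℂ)

abbrev MCC : Type := Matrix (Fin 3) (Fin 3) CC

/-- `A* = ᵗĀ`. -/
def ctransA (M : MCC) : MCC := (M.map barA)ᵀ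

lemma map_barA_add (M N : MCC) : (M + N).map barA = M.map barA + N.map barA :=
  Matrix.map_add _ (fun a b => map_add barA a b) M N

lemma map_barA_smul (c : ℂ) (M : MCC) : (c • M).map barA = c • (M.map barA) := by
  ext i j
  simp only [Matrix.map_apply, Matrix.smul_apply]
  exact _root_.map_smul barA c (M i j)

/-- `J(3,ℂ^C)`: the 9-dimensional `C`-vector space of 3×3 `bar`-Hermitian matrices over `𝔄`. -/
def J3CC : Submodule ℂ MCC where
  carrier := {X | (X.map barA)ᵀ = X}
  add_mem' := fun {a b} ha hb => by
    simp only [Set.mem_setOf_eq] at *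
    rw [map_barA_add, Matrix.transpose_add, ha, hb]
  zero_mem' := by
    simp only [Set.mem_setOf_eq]
    have : (0 : MCC).map barA = 0 := Matrix.map_zero _ (map_zero barA)
    rw [this, Matrix.transpose_zero]
  smul_mem' := fun c a ha => by
    simp only [Set.mem_setOf_eq] at *
    rw [map_barA_smul, Matrix.transpose_smul, ha]

/-- The Jordan product `X∘Y = (XY + YX)/2`. -/
def jmul (M N : MCC) : MCC := (2⁻¹ : ℂ) • (M * N + N * M)

/-- The Freudenthal determinant on `J(3,ℂ^C)` (given by the explicit formula). -/
def detA (X : MCC) : CC :=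
  X 0 0 * X 1 1 * X 2 2 + X 1 2 * X 2 0 * X 0 1
    + barA (X 1 2) * barA (X 2 0) * barA (X 0 1)
    - X 0 0 * (X 1 2 * barA (X 1 2)) - X 1 1 * (X 2 0 * barA (X 2 0))
    - X 2 2 * (X 0 1 * barA (X 0 1))

lemma map_barA_mul (M N : MCC) : (M * N).map barA = M.map barA * N.map barA := by
  ext i j
  simp [Matrix.map_apply, Matrix.mul_apply, map_sum]

lemma jmul_mem {X Y : MCC} (hX : (X.map barA)ᵀ = X) (hY : (Y.map barA)ᵀ = Y) :
    ((jmul X Y).map barA)ᵀ = jmul X Y := by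
  have hmul : ∀ M N : MCC, ((M * N).map barA)ᵀ = (N.map barA)ᵀ * (M.map barA)ᵀ := by
    intro M N
    rw [map_barA_mul, Matrix.transpose_mul]
  rw [jmul, map_barA_smul, Matrix.transpose_smul, map_barA_add, Matrix.transpose_add,
    hmul, hmul, hX, hY, add_comm]

/-- The Jordan product as an operation on `J(3,ℂ^C)`. -/
def jordanJ (X Y : J3CC) : J3CC := ⟨jmul X Y, jmul_mem X.2 Y.2⟩

/-- The identity matrix as an element of `J(3,ℂ^C)`. -/
def EJ : J3CC :=
  ⟨1, by
    show ((1 : MCC).map barA)ᵀ = 1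
    have : (1 : MCC).map barA = 1 := Matrix.map_one _ (map_zero barA) (map_one barA)
    rw [this, Matrix.transpose_one]⟩


/-! ### Auxiliary machinery for `stmt_6` -/

section Aux

/-- First component projection `CC →ₐ[ℂ] ℂ`, `a ⊗ b ↦ a * b`. -/
def pOne : CC →ₐ[ℂ] ℂ :=
  Algebra.TensorProduct.lift (AlgHom.id ℂ ℂ) (AlgHom.id ℝ ℂ)
    (fun _ _ => Commute.all _ _)

/-- Second component projection `CC →ₐ[ℂ] ℂ`, `a ⊗ b ↦ a * conj b`. -/
def pTwo : CC →ₐ[ℂ] ℂ :=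
  Algebra.TensorProduct.lift (AlgHom.id ℂ ℂ) Complex.conjAe.toAlgHom
    (fun _ _ => Commute.all _ _)

@[simp] lemma pOne_tmul (a b : ℂ) : pOne (a ⊗ₜ[ℝ] b) = a * b := by
  simp [pOne, Algebra.TensorProduct.lift_tmul]

@[simp] lemma pTwo_tmul (a b : ℂ) : pTwo (a ⊗ₜ[ℝ] b) = a * (starRingEnd ℂ) b := by
  simp [pTwo, Algebra.TensorProduct.lift_tmul, Complex.conjAe]

lemma pOne_barA (x : CC) : pOne (barA x) = pTwo x := by
  induction x using TensorProduct.induction_on with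
  | zero => simp
  | tmul a b => simp [barA, Algebra.TensorProduct.map_tmul, Complex.conjAe]
  | add x y hx hy => simp [map_add, hx, hy]

lemma pTwo_barA (x : CC) : pTwo (barA x) = pOne x := by
  induction x using TensorProduct.induction_on with
  | zero => simp
  | tmul a b => simp [barA, Algebra.TensorProduct.map_tmul, Complex.conjAe]
  | add x y hx hy => simp [map_add, hx, hy]

lemma CC_decomp (x : CC) : ∃ a b : ℂ, x = a ⊗ₜ[ℝ] 1 + b ⊗ₜ[ℝ] Complex.I := by
  induction x using TensorProduct.induction_on with
  | zero => exact ⟨0, 0, by simp⟩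
  | tmul z w =>
    refine ⟨z * w.re, z * w.im, ?_⟩
    have hw : w = (w.re : ℂ) + (w.im : ℂ) * Complex.I := (Complex.re_add_im w).symm
    calc z ⊗ₜ[ℝ] w = z ⊗ₜ[ℝ] ((w.re : ℂ) + (w.im : ℂ) * Complex.I) := by rw [← hw]
    _ = z ⊗ₜ[ℝ] (w.re • (1:ℂ)) + z ⊗ₜ[ℝ] (w.im • Complex.I) := by
        rw [← tmul_add]; congr 1
        simp [Complex.real_smul]
    _ = (z * w.re) ⊗ₜ[ℝ] 1 + (z * w.im) ⊗ₜ[ℝ] Complex.I := by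
        rw [tmul_smul, tmul_smul]
        rw [smul_tmul', smul_tmul']
        congr 1 <;> congr 1 <;> simp [smul_eq_mul, mul_comm]
  | add x y hx hy =>
    obtain ⟨a1, b1, h1⟩ := hx
    obtain ⟨a2, b2, h2⟩ := hy
    exact ⟨a1 + a2, b1 + b2, by rw [h1, h2, add_tmul, add_tmul]; abel⟩

lemma CC_inj {x : CC} (h1 : pOne x = 0) (h2 : pTwo x = 0) : x = 0 := by
  obtain ⟨a, b, rfl⟩ := CC_decomp x
  simp only [map_add, pOne_tmul, pTwo_tmul, mul_one, Complex.conj_I,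
    RingHom.map_one] at h1 h2
  have ha : a = 0 := by linear_combination (h1 + h2) / 2
  have hb : b = 0 := by
    have hI : b * Complex.I = 0 := by linear_combination (h1 - h2) / 2
    simpa [Complex.I_ne_zero] using mul_eq_zero.mp hI
  simp [ha, hb]

/-- The idempotents of `CC` giving the two components. -/
def hOne : CC := (2⁻¹ : ℂ) • ((1 : CC) - Complex.I • e1)
def hTwo : CC := (2⁻¹ : ℂ) • ((1 : CC) + Complex.I • e1)

@[simp] lemma pOne_e1 : pOne e1 = Complex.I := by simp [e1]
@[simp] lemma pTwo_e1 : pTwo e1 = -Complex.I := by simp [e1, Complex.conj_I]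

@[simp] lemma pOne_hOne : pOne hOne = 1 := by
  have h : pOne hOne = (2⁻¹:ℂ) * (1 - Complex.I * Complex.I) := by
    simp [hOne, smul_eq_mul]; try ring
  rw [h, Complex.I_mul_I]; norm_num

@[simp] lemma pTwo_hOne : pTwo hOne = 0 := by
  have h : pTwo hOne = (2⁻¹:ℂ) * (1 - Complex.I * -Complex.I) := by
    simp [hOne, smul_eq_mul]; try ring
  rw [h]
  have : Complex.I * -Complex.I = 1 := by
    rw [mul_neg, Complex.I_mul_I]; norm_num
  rw [this]; norm_num

@[simp] lemma pOne_hTwo : pOne hTwo = 0 := by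
  have h : pOne hTwo = (2⁻¹:ℂ) * (1 + Complex.I * Complex.I) := by
    simp [hTwo, smul_eq_mul]; try ring
  rw [h, Complex.I_mul_I]; norm_num

@[simp] lemma pTwo_hTwo : pTwo hTwo = 1 := by
  have h : pTwo hTwo = (2⁻¹:ℂ) * (1 + Complex.I * -Complex.I) := by
    simp [hTwo, smul_eq_mul]; try ring
  rw [h]
  have : Complex.I * -Complex.I = 1 := by
    rw [mul_neg, Complex.I_mul_I]; norm_num
  rw [this]; norm_num

abbrev MC3 : Type := Matrix (Fin 3) (Fin 3) ℂ

/-- Component maps on matrices. -/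
def mOne (M : MCC) : MC3 := M.map pOne
def mTwo (M : MCC) : MC3 := M.map pTwo

lemma mOne_mul (M N : MCC) : mOne (M * N) = mOne M * mOne N := by
  ext k j
  simp [mOne, Matrix.mul_apply, Matrix.map_apply, map_sum]

lemma mTwo_mul (M N : MCC) : mTwo (M * N) = mTwo M * mTwo N := by
  ext k j
  simp [mTwo, Matrix.mul_apply, Matrix.map_apply, map_sum]

lemma mOne_one : mOne 1 = 1 :=
  Matrix.map_one _ (map_zero pOne) (_root_.map_one pOne)

lemma mTwo_one : mTwo 1 = 1 :=
  Matrix.map_one _ (map_zero pTwo) (_root_.map_one pTwo)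

lemma m_inj {M N : MCC} (h1 : mOne M = mOne N) (h2 : mTwo M = mTwo N) : M = N := by
  ext k j
  have e1' : pOne (M k j - N k j) = 0 := by
    have := congrFun (congrFun h1 k) j
    simp only [mOne, Matrix.map_apply] at this
    rw [map_sub, this, sub_self]
  have e2' : pTwo (M k j - N k j) = 0 := by
    have := congrFun (congrFun h2 k) j
    simp only [mTwo, Matrix.map_apply] at this
    rw [map_sub, this, sub_self]
  have := CC_inj e1' e2'
  exact sub_eq_zero.mp this

lemma mOne_std (i : Fin 3) :
    mOne (Matrix.single i i (1 : CC)) = Matrix.single i i 1 := by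
  ext k j
  simp [mOne, Matrix.map_apply, Matrix.single, apply_ite pOne]

lemma mTwo_std (i : Fin 3) :
    mTwo (Matrix.single i i (1 : CC)) = Matrix.single i i 1 := by
  ext k j
  simp [mTwo, Matrix.map_apply, Matrix.single, apply_ite pTwo]

lemma std_transpose (i : Fin 3) :
    (Matrix.single i i (1 : ℂ))ᵀ = Matrix.single i i 1 := by
  ext k j
  simp [Matrix.single, and_comm]

/-- The core linear-algebra fact: a rank-one idempotent over `ℂ` is conjugate to each
diagonal matrix unit. -/
lemma key_conj (P : MC3) (hP : P * P = P) (htr : P.trace = 1) (i : Fin 3) :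
    ∃ U V : MC3, U * V = 1 ∧ V * U = 1 ∧
      V * P * U = Matrix.single i i 1 := by
  classical
  set e : Module.Basis (Fin 3) ℂ (Fin 3 → ℂ) := Pi.basisFun ℂ (Fin 3) with he
  set f : (Fin 3 → ℂ) →ₗ[ℂ] (Fin 3 → ℂ) := Matrix.toLin e e P with hf
  have hPf : LinearMap.toMatrix e e f = P := LinearMap.toMatrix_toLin e e P
  have hff : f ∘ₗ f = f := by
    rw [hf, ← Matrix.toLin_mul e e e, hP]
  have hproj : LinearMap.IsProj (LinearMap.range f) f := by
    refine ⟨fun x => LinearMap.mem_range_self f x, ?_⟩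
    rintro x ⟨y, rfl⟩
    exact congrFun (congrArg DFunLike.coe hff) y
  have htrf : LinearMap.trace ℂ _ f = 1 := by
    rw [LinearMap.trace_eq_matrix_trace ℂ e f, hPf, htr]
  have hr : Module.finrank ℂ (LinearMap.range f) = 1 := by
    have := hproj.trace
    rw [htrf] at this
    exact_mod_cast this.symm
  have hk : Module.finrank ℂ (LinearMap.ker f) = 2 := by
    have h3 := LinearMap.finrank_range_add_finrank_ker f
    rw [hr, Module.finrank_fin_fun] at h3
    omega
  obtain b1 := Module.finBasisOfFinrankEq ℂ (LinearMap.range f) hr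
  obtain b2 := Module.finBasisOfFinrankEq ℂ (LinearMap.ker f) hk
  have hcompl : IsCompl (LinearMap.range f) (LinearMap.ker f) := hproj.isCompl
  set b0 : Module.Basis (Fin 1 ⊕ Fin 2) ℂ (Fin 3 → ℂ) :=
    (b1.prod b2).map (Submodule.prodEquivOfIsCompl _ _ hcompl) with hb0
  have hb0inl : ∀ j, b0 (Sum.inl j) ∈ LinearMap.range f := by
    intro j
    simp only [hb0, Module.Basis.map_apply, Module.Basis.prod_apply, Sum.elim_inl,
      Submodule.coe_prodEquivOfIsCompl', Function.comp_apply]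
    simp
  have hb0inr : ∀ j, b0 (Sum.inr j) ∈ LinearMap.ker f := by
    intro j
    simp only [hb0, Module.Basis.map_apply, Module.Basis.prod_apply, Sum.elim_inr,
      Submodule.coe_prodEquivOfIsCompl', Function.comp_apply]
    simp
  set σ : (Fin 1 ⊕ Fin 2) ≃ Fin 3 :=
    (finSumFinEquiv.trans (finCongr (by norm_num))).trans (Equiv.swap 0 i) with hσ
  set c : Module.Basis (Fin 3) ℂ (Fin 3 → ℂ) := b0.reindex σ with hc
  have hci : f (c i) = c i := by
    have : c i = b0 (Sum.inl 0) := by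
      rw [hc, Module.Basis.reindex_apply]
      congr 1
      rw [hσ]
      simp only [Equiv.symm_apply_eq, Equiv.trans_apply]
      rw [show finSumFinEquiv (Sum.inl (0:Fin 1)) = (0 : Fin (1+2)) from rfl]
      simp
    rw [this]
    exact hproj.map_id _ (hb0inl 0)
  have hcj : ∀ j, j ≠ i → f (c j) = 0 := by
    intro j hj
    have hne : σ.symm j ≠ Sum.inl 0 := by
      intro h
      apply hj
      have : j = σ (Sum.inl 0) := by rw [← h, Equiv.apply_symm_apply]
      rw [this, hσ]
      simp only [Equiv.trans_apply]
      rw [show finSumFinEquiv (Sum.inl (0:Fin 1)) = (0 : Fin (1+2)) from rfl]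
      simp
    rw [hc, Module.Basis.reindex_apply]
    rcases h : σ.symm j with m | m
    · exfalso; apply hne; rw [h]; congr; omega
    · exact (hb0inr m)
  have hE : LinearMap.toMatrix c c f = Matrix.single i i 1 := by
    ext k j
    rw [LinearMap.toMatrix_apply]
    by_cases hji : j = i
    · subst hji
      rw [hci, Module.Basis.repr_self]
      by_cases hk : k = j
      · subst hk; simp
      · simp [Finsupp.single_apply, Ne.symm hk, hk]
    · rw [hcj j hji, map_zero]
      simp only [Matrix.single, Matrix.of_apply]
      rw [if_neg (by rintro ⟨-, h2⟩; exact hji h2.symm)]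
      simp
  refine ⟨e.toMatrix c, c.toMatrix e, ?_, ?_, ?_⟩
  · exact Module.Basis.toMatrix_mul_toMatrix_flip e c
  · exact Module.Basis.toMatrix_mul_toMatrix_flip c e
  · rw [mul_assoc, ← hPf, linearMap_toMatrix_mul_basis_toMatrix,
      basis_toMatrix_mul_linearMap_toMatrix, hE]

end Aux

/-- any `X ∈ J(3,ℂ^C)` with `X∘X = X` and `tr X = 1` can be transformed to
each diagonal matrix unit `E_i` by some `B ∈ U(3,ℂ^C)`:  `B* X B = E_i`. -/
theorem stmt_6 (X : MCC) (hX : (X.map barA)ᵀ = X)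
    (hidem : jmul X X = X) (htr : X.trace = 1) :
    ∀ i : Fin 3, ∃ B : MCC, B * ctransA B = 1 ∧ ctransA B * X * B = Matrix.single i i 1 := by
  intro i
  classical
  have hXX : X * X = X := by
    have h2 : (2⁻¹:ℂ) • ((2:ℂ) • (X * X)) = X * X := by
      rw [smul_smul]; norm_num
    calc X * X = (2⁻¹:ℂ) • ((2:ℂ) • (X * X)) := h2.symm
    _ = jmul X X := by rw [jmul, two_smul]
    _ = X := hidem
  set P : MC3 := mOne X with hPdef
  have hP : P * P = P := by rw [hPdef, ← mOne_mul, hXX]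
  have htrP : P.trace = 1 := by
    have h : P.trace = pOne X.trace := by
      simp [hPdef, mOne, Matrix.trace, Matrix.diag, Matrix.map_apply, map_sum]
    rw [h, htr, _root_.map_one]
  have hQ : mTwo X = Pᵀ := by
    ext k j
    have hx : barA (X j k) = X k j := by
      have := congrFun (congrFun hX k) j
      simpa [Matrix.transpose_apply, Matrix.map_apply] using this
    calc mTwo X k j = pTwo (X k j) := rfl
    _ = pTwo (barA (X j k)) := by rw [hx]
    _ = pOne (X j k) := pTwo_barA _
    _ = Pᵀ k j := rfl
  obtain ⟨U, V, hUV, hVU, hVPU⟩ := key_conj P hP htrP i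
  set B : MCC := Matrix.of (fun k j => (U k j) • hOne + (Vᵀ k j) • hTwo) with hB
  have hm1B : mOne B = U := by
    ext k j
    simp [mOne, hB, Matrix.map_apply, smul_eq_mul]
  have hm2B : mTwo B = Vᵀ := by
    ext k j
    simp [mTwo, hB, Matrix.map_apply, smul_eq_mul]
  have hm1ct : mOne (ctransA B) = V := by
    ext k j
    calc mOne (ctransA B) k j = pOne (barA (B j k)) := rfl
    _ = pTwo (B j k) := pOne_barA _
    _ = Vᵀ j k := by rw [← hm2B]; rfl
    _ = V k j := rfl
  have hm2ct : mTwo (ctransA B) = Uᵀ := by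
    ext k j
    calc mTwo (ctransA B) k j = pTwo (barA (B j k)) := rfl
    _ = pOne (B j k) := pTwo_barA _
    _ = Uᵀ k j := by rw [← hm1B]; rfl
  refine ⟨B, ?_, ?_⟩
  · refine m_inj ?_ ?_
    · rw [mOne_mul, hm1B, hm1ct, hUV, mOne_one]
    · rw [mTwo_mul, hm2B, hm2ct, ← Matrix.transpose_mul, hUV,
        Matrix.transpose_one, mTwo_one]
  · refine m_inj ?_ ?_
    · rw [mOne_mul, mOne_mul, hm1ct, hm1B, ← hPdef, hVPU, mOne_std]
    · rw [mTwo_mul, mTwo_mul, hm2ct, hm2B, hQ, mTwo_std]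
      have htp : Uᵀ * Pᵀ * Vᵀ = (V * P * U)ᵀ := by
        rw [Matrix.transpose_mul, Matrix.transpose_mul, mul_assoc]
      rw [htp, hVPU, std_transpose]
end
end
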